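/- Let (Ω, F, P) be a probability space and G ⊆ F a sub-σ-algebra. Let q, q⋆, γ, v be G-measurable real random variables with γ ≥ 0 and v ≥ 0 almost surely, and let Y be a square-integrable real random variable. Let L > 0 and B > 0 be constants. Assume that almost surely: (i) E[Y | G] · (q − q⋆) ≥ L (q − q⋆)², and (ii) E[Y² | G] ≤ B (4 + 3v + (q − q⋆)²). Then almost surely E[(q − γY − q⋆)² | G] ≤ (1 − 2Lγ + Bγ²)(q − q⋆)² + Bγ²(4 + 3v). -/

import Mathlib

open MeasureTheory

private lemma ae_of_restrict_iUnion {Ω : Type*} [mΩ : MeasurableSpace Ω] {μ : Measure Ω}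
    {A : ℕ → Set Ω} (hA : ∀ n, MeasurableSet (A n)) (hcov : ∀ ω, ∃ n, ω ∈ A n)
    {p : Ω → Prop} (h : ∀ n, ∀ᵐ ω ∂μ.restrict (A n), p ω) : ∀ᵐ ω ∂μ, p ω := by
  rw [ae_iff]
  have h0 : ∀ n, μ ({ω | ¬ p ω} ∩ A n) = 0 := fun n => by
    have := ae_iff.1 (h n)
    rwa [Measure.restrict_apply' (hA n)] at this
  refine measure_mono_null (fun ω hω => ?_) (measure_iUnion_null h0)
  obtain ⟨n, hn⟩ := hcov ω
  exact Set.mem_iUnion.2 ⟨n, hω, hn⟩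

private lemma condexp_sq_expand {Ω : Type*} [m0 : MeasurableSpace Ω]
    (P : Measure Ω) [IsProbabilityMeasure P]
    (G : MeasurableSpace Ω) (hG : G ≤ m0)
    (Y : Ω → ℝ) (hY1 : Integrable Y P) (hY2 : Integrable (fun ω => (Y ω) ^ 2) P)
    (a b : Ω → ℝ) (ha : Measurable[G] a) (hb : Measurable[G] b)
    (Ka Kb : ℝ) (hKa : 0 ≤ Ka) (hKb : 0 ≤ Kb)
    (haK : ∀ ω, |a ω| ≤ Ka) (hbK : ∀ ω, |b ω| ≤ Kb) :
    Integrable (fun ω' => (a ω' - b ω' * Y ω') ^ 2) P ∧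
    ∀ᵐ ω ∂P, (P[fun ω' => (a ω' - b ω' * Y ω') ^ 2|G]) ω
      = (a ω) ^ 2 - 2 * a ω * b ω * (P[Y|G]) ω
        + (b ω) ^ 2 * (P[fun ω' => (Y ω') ^ 2|G]) ω := by
  have ham : Measurable[m0] a := ha.mono hG le_rfl
  have hbm : Measurable[m0] b := hb.mono hG le_rfl
  -- integrability of the three pieces
  have Ia2 : Integrable (fun ω => a ω ^ 2) P := by
    refine (integrable_const (Ka ^ 2)).mono' ((ham.pow_const 2).aestronglyMeasurable) ?_
    refine Filter.Eventually.of_forall fun ω => ?_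
    rw [Real.norm_eq_abs, abs_of_nonneg (sq_nonneg _)]
    exact sq_le_sq' (neg_le_of_abs_le (haK ω)) (le_of_abs_le (haK ω))
  have Iab : Integrable (fun ω => 2 * a ω * b ω * Y ω) P := by
    refine ((hY1.abs.const_mul (2 * Ka * Kb)).mono'
      ((((measurable_const.mul ham).mul hbm).aestronglyMeasurable).mul
        hY1.aestronglyMeasurable) ?_)
    refine Filter.Eventually.of_forall fun ω => ?_
    rw [Real.norm_eq_abs, abs_mul, abs_mul, abs_mul, abs_two]
    nlinarith [haK ω, hbK ω, abs_nonneg (a ω), abs_nonneg (b ω), abs_nonneg (Y ω),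
      mul_le_mul (haK ω) (hbK ω) (abs_nonneg _) hKa]
  have Ib2 : Integrable (fun ω => b ω ^ 2 * (Y ω) ^ 2) P := by
    refine (hY2.const_mul (Kb ^ 2)).mono'
      (((hbm.pow_const 2).aestronglyMeasurable).mul hY2.aestronglyMeasurable) ?_
    refine Filter.Eventually.of_forall fun ω => ?_
    rw [Real.norm_eq_abs, abs_mul, abs_of_nonneg (sq_nonneg (b ω)),
      abs_of_nonneg (sq_nonneg (Y ω))]
    exact mul_le_mul_of_nonneg_right
      (sq_le_sq' (neg_le_of_abs_le (hbK ω)) (le_of_abs_le (hbK ω))) (sq_nonneg _)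
  have hsplit : (fun ω' => (a ω' - b ω' * Y ω') ^ 2)
      = ((fun ω' => a ω' ^ 2) - fun ω' => 2 * a ω' * b ω' * Y ω')
        + fun ω' => b ω' ^ 2 * (Y ω') ^ 2 := by
    funext ω'; simp only [Pi.add_apply, Pi.sub_apply]; ring
  have Itot : Integrable (fun ω' => (a ω' - b ω' * Y ω') ^ 2) P := by
    rw [hsplit]; exact (Ia2.sub Iab).add Ib2
  refine ⟨Itot, ?_⟩
  have eA := condExp_add (μ := P) (m := G) (Ia2.sub Iab) Ib2
  have eB := condExp_sub (μ := P) (m := G) Ia2 Iab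
  have eC : P[(fun ω => a ω ^ 2)|G] = fun ω => a ω ^ 2 :=
    condExp_of_stronglyMeasurable hG ((ha.pow_const 2).stronglyMeasurable) Ia2
  have eD : P[(fun ω => 2 * a ω * b ω) * Y|G]
      =ᵐ[P] (fun ω => 2 * a ω * b ω) * P[Y|G] :=
    condExp_mul_of_stronglyMeasurable_left (((measurable_const.mul ha).mul hb).stronglyMeasurable)
      Iab hY1
  have eE : P[(fun ω => b ω ^ 2) * fun ω' => (Y ω') ^ 2|G]
      =ᵐ[P] (fun ω => b ω ^ 2) * P[fun ω' => (Y ω') ^ 2|G] :=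
    condExp_mul_of_stronglyMeasurable_left ((hb.pow_const 2).stronglyMeasurable) Ib2 hY2
  have hD' : P[(fun ω => 2 * a ω * b ω * Y ω)|G]
      = P[(fun ω => 2 * a ω * b ω) * Y|G] := rfl
  have hE' : P[(fun ω => b ω ^ 2 * (Y ω) ^ 2)|G]
      = P[(fun ω => b ω ^ 2) * fun ω' => (Y ω') ^ 2|G] := rfl
  rw [hsplit]
  filter_upwards [eA, eB, eD, eE] with ω hA hB hD hE
  rw [Pi.add_apply] at hA
  have hDv : (P[fun ω => 2 * a ω * b ω * Y ω|G]) ω = 2 * a ω * b ω * (P[Y|G]) ω := by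
    rw [hD']; simpa using hD
  have hEv : (P[fun ω => b ω ^ 2 * (Y ω) ^ 2|G]) ω
      = b ω ^ 2 * (P[fun ω' => (Y ω') ^ 2|G]) ω := by
    rw [hE']; simpa using hE
  rw [hA, hB, Pi.sub_apply, hDv, hEv]
  simp only [eC]
  try ring

/-- One-step error contraction for the update `q' = q − γ Y`. -/
theorem one_step_contraction {Ω : Type*} [m0 : MeasurableSpace Ω]
    (P : Measure Ω) [IsProbabilityMeasure P]
    (G : MeasurableSpace Ω) (hG : G ≤ m0)
    (q qstar γ v : Ω → ℝ)
    (hq : Measurable[G] q) (hqstar : Measurable[G] qstar)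
    (hγ : Measurable[G] γ) (hv : Measurable[G] v)
    (hγ0 : ∀ᵐ ω ∂P, 0 ≤ γ ω) (hv0 : ∀ᵐ ω ∂P, 0 ≤ v ω)
    (Y : Ω → ℝ) (hY : MemLp Y 2 P)
    (L B : ℝ) (hL : 0 < L) (hB : 0 < B)
    (h1 : ∀ᵐ ω ∂P, L * (q ω - qstar ω) ^ 2 ≤ (P[Y|G]) ω * (q ω - qstar ω))
    (h2 : ∀ᵐ ω ∂P, (P[fun ω' => (Y ω') ^ 2|G]) ω ≤ B * (4 + 3 * v ω + (q ω - qstar ω) ^ 2)) :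
    ∀ᵐ ω ∂P,
      (P[fun ω' => (q ω' - γ ω' * Y ω' - qstar ω') ^ 2|G]) ω
        ≤ (1 - 2 * L * γ ω + B * (γ ω) ^ 2) * (q ω - qstar ω) ^ 2
          + B * (γ ω) ^ 2 * (4 + 3 * v ω) := by
  have hY1 : Integrable Y P := hY.integrable one_le_two
  have hY2 : Integrable (fun ω => (Y ω) ^ 2) P := hY.integrable_sq
  have hx : Measurable[G] fun ω => q ω - qstar ω := hq.sub hqstar
  -- conditional Cauchy–Schwarz : (E[Y|G])² ≤ E[Y²|G] a.e.
  have hCS : ∀ᵐ ω ∂P, ((P[Y|G]) ω) ^ 2 ≤ (P[fun ω' => (Y ω') ^ 2|G]) ω := by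
    have hq1 : ∀ᵐ ω ∂P, ∀ t : ℚ,
        0 ≤ ((t : ℝ)) ^ 2 - 2 * t * (P[Y|G]) ω + (P[fun ω' => (Y ω') ^ 2|G]) ω := by
      rw [ae_all_iff]
      intro t
      have hexp := (condexp_sq_expand (m0 := m0) P G hG Y hY1 hY2 (fun _ => (t : ℝ)) (fun _ => (1 : ℝ))
        measurable_const measurable_const |(t : ℝ)| 1 (abs_nonneg _) zero_le_one
        (fun _ => le_rfl) (fun _ => by simp)).2
      have hnn : (0 : Ω → ℝ) ≤ᵐ[P] P[fun ω' => ((t : ℝ) - 1 * Y ω') ^ 2|G] :=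
        condExp_nonneg (Filter.Eventually.of_forall fun ω => sq_nonneg _)
      filter_upwards [hexp, hnn] with ω he hn
      rw [he] at hn
      simp only [Pi.zero_apply] at hn
      linarith
    filter_upwards [hq1] with ω hω
    by_contra hc
    push_neg at hc
    set E := (P[Y|G]) ω
    set S := (P[fun ω' => (Y ω') ^ 2|G]) ω
    have hpos : 0 < E ^ 2 - S := by linarith
    set ε := Real.sqrt (E ^ 2 - S) with hε
    have hε0 : 0 < ε := Real.sqrt_pos.2 hpos
    have hε2 : ε ^ 2 = E ^ 2 - S := Real.sq_sqrt hpos.le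
    obtain ⟨t, ht1, ht2⟩ := exists_rat_btwn (show E - ε < E by linarith)
    have := hω t
    nlinarith [this]
  by_cases hf : Integrable (fun ω => (q ω - γ ω * Y ω - qstar ω) ^ 2) P
  swap
  · rw [condExp_of_not_integrable hf]
    filter_upwards [h1, h2, hγ0, hv0, hCS] with ω e1 e2 e3 e4 e5
    simp only [Pi.zero_apply]
    nlinarith [sq_nonneg (q ω - qstar ω - γ ω * (P[Y|G]) ω),
      mul_le_mul_of_nonneg_left e1 (by linarith : (0:ℝ) ≤ 2 * γ ω),
      mul_le_mul_of_nonneg_left e2 (sq_nonneg (γ ω)),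
      mul_le_mul_of_nonneg_left e5 (sq_nonneg (γ ω))]
  · set A : ℕ → Set Ω := fun n =>
      {ω | |q ω - qstar ω| ≤ (n : ℝ)} ∩ {ω | |γ ω| ≤ (n : ℝ)} with hA
    have hAG : ∀ n, MeasurableSet[G] (A n) :=
      fun n => (measurableSet_le hx.abs measurable_const).inter
        (measurableSet_le hγ.abs measurable_const)
    have hcov : ∀ ω, ∃ n, ω ∈ A n := by
      intro ω
      obtain ⟨n, hn⟩ := exists_nat_ge (max |q ω - qstar ω| |γ ω|)
      exact ⟨n, ⟨(le_max_left _ _).trans hn, (le_max_right _ _).trans hn⟩⟩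
    refine ae_of_restrict_iUnion (mΩ := m0) (fun n => hG _ (hAG n)) hcov fun n => ?_
    -- clamp
    set c : ℝ → ℝ := fun t => max (-(n : ℝ)) (min (n : ℝ) t) with hcdef
    have hcm : Measurable c := measurable_const.max (measurable_const.min measurable_id)
    have hcb : ∀ t, |c t| ≤ (n : ℝ) := fun t =>
      abs_le.2 ⟨le_max_left _ _,
        max_le (neg_le_self (Nat.cast_nonneg n)) (min_le_left _ _)⟩
    have hceq : ∀ t, |t| ≤ (n : ℝ) → c t = t := by
      intro t ht
      obtain ⟨h1', h2'⟩ := abs_le.1 ht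
      simp only [hcdef]
      rw [min_eq_right h2', max_eq_right h1']
    set xn : Ω → ℝ := fun ω => c (q ω - qstar ω) with hxn
    set γn : Ω → ℝ := fun ω => c (γ ω) with hγn
    obtain ⟨Ifn, hexp⟩ := condexp_sq_expand (m0 := m0) P G hG Y hY1 hY2 xn γn
      (hcm.comp hx) (hcm.comp hγ) n n (Nat.cast_nonneg n) (Nat.cast_nonneg n)
      (fun ω => hcb _) (fun ω => hcb _)
    -- indicator equality
    have hind : (A n).indicator (fun ω => (q ω - γ ω * Y ω - qstar ω) ^ 2)
        = (A n).indicator (fun ω' => (xn ω' - γn ω' * Y ω') ^ 2) := by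
      funext ω
      by_cases hω : ω ∈ A n
      · rw [Set.indicator_of_mem hω, Set.indicator_of_mem hω]
        have e1 : xn ω = q ω - qstar ω := hceq _ hω.1
        have e2 : γn ω = γ ω := hceq _ hω.2
        rw [e1, e2]; ring
      · rw [Set.indicator_of_notMem hω, Set.indicator_of_notMem hω]
    have hIf := condExp_indicator (μ := P) hf (hAG n)
    have hIfn := condExp_indicator (μ := P) Ifn (hAG n)
    have h5 : (A n).indicator (P[fun ω => (q ω - γ ω * Y ω - qstar ω) ^ 2|G])
        =ᵐ[P] (A n).indicator (P[fun ω' => (xn ω' - γn ω' * Y ω') ^ 2|G]) :=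
      hIf.symm.trans (by rw [hind]; exact hIfn)
    filter_upwards [ae_restrict_mem (hG _ (hAG n)), ae_restrict_of_ae h5,
      ae_restrict_of_ae hexp, ae_restrict_of_ae h1, ae_restrict_of_ae h2,
      ae_restrict_of_ae hγ0] with ω hmem hind' hexp' e1 e2 e3
    rw [Set.indicator_of_mem hmem, Set.indicator_of_mem hmem] at hind'
    have exn : xn ω = q ω - qstar ω := hceq _ hmem.1
    have eγn : γn ω = γ ω := hceq _ hmem.2
    rw [hind', hexp', exn, eγn]
    nlinarith [mul_le_mul_of_nonneg_left e1 (by linarith : (0:ℝ) ≤ 2 * γ ω),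
      mul_le_mul_of_nonneg_left e2 (sq_nonneg (γ ω))]
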